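/- Fix a winner number k with 1 ≤ k ≤ n, a Gini cap g ∈ (0,1), and assume b_{n−k+1} > 0. Then the set {p > 0 : g*_k(p) ≤ g} has a maximum element p*_k; moreover p*_k ∈ [k·b_{n−k+1}, Σ_{i=n−k+1}^n b_i], at price p*_k a feasible allocation with flexible Gini index at most g exists, and for every price p > p*_k there is no feasible allocation with flexible Gini index at most g. -/
import Mathlib


open Finset

/-- The ascending rearrangement of a vector. -/
noncomputable def sortedAsc {n : ℕ} (a : Fin n → ℝ) : Fin n → ℝ :=
  a ∘ Tuple.sort a

/-- The Gini index of an ascending-sorted nonnegative vector `y` on `Fin k`: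
`2 (∑ i, i * y_i) / (k ∑ i, y_i) - (k+1)/k` (with 1-based weights). -/
noncomputable def gini {k : ℕ} (y : Fin k → ℝ) : ℝ :=
  2 * (∑ i : Fin k, (((i : ℕ) : ℝ) + 1) * y i) / (k * ∑ i, y i) - ((k : ℝ) + 1) / k

/-- The flexible Gini index with winner number `k`: the Gini index of the top `k`
entries of the ascending rearrangement of the allocation. -/
noncomputable def flexGini {n : ℕ} (k : ℕ) (a : Fin n → ℝ) : ℝ :=
  if h : k ≤ n then
    gini (fun i : Fin k => sortedAsc a ⟨n - k + i, by have := i.isLt; omega⟩)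
  else 0

/-- Feasibility of allocation `a` for budgets `b`, winner number `k`, price `p`. -/
def Feasible {n : ℕ} (b : Fin n → ℝ) (k : ℕ) (p : ℝ) (a : Fin n → ℝ) : Prop :=
  (∀ i, 0 ≤ a i) ∧ (∑ i, a i = 1) ∧ (∀ i, a i * p ≤ b i) ∧
    n - k ≤ (Finset.univ.filter fun i => a i = 0).card

open Classical in
/-- The minimum flexible Gini index over feasible allocations (`1` if none exists). -/
noncomputable def gStar {n : ℕ} (b : Fin n → ℝ) (k : ℕ) (p : ℝ) : ℝ :=
  if ∃ a, Feasible b k p a then sInf (flexGini k '' {a | Feasible b k p a}) else 1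

/-- The maximum price for winner number `k` under Gini cap `g`. -/
noncomputable def pStar {n : ℕ} (b : Fin n → ℝ) (k : ℕ) (g : ℝ) : ℝ :=
  sSup {p : ℝ | 0 < p ∧ gStar b k p ≤ g}

/-- The Gini mechanism's price: the maximum of `pStar` over allowed winner numbers. -/
noncomputable def pStarK {n : ℕ} (b : Fin n → ℝ) (K : Finset ℕ) (g : ℝ) : ℝ :=
  sSup ((fun k => pStar b k g) '' (K : Set ℕ))

/-- The `(m+1)`-st smallest budget (0-based index `m`). -/
noncomputable def nthSmallest {n : ℕ} (b : Fin n → ℝ) (m : ℕ) : ℝ :=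
  if h : m < n then sortedAsc b ⟨m, h⟩ else 0

/-- The allocation cap `C` at price `p` for winner number `k`. -/
noncomputable def capOf {n : ℕ} (b : Fin n → ℝ) (k : ℕ) (p : ℝ) : ℝ :=
  sInf {C : ℝ | 0 < C ∧
    1 ≤ ∑ i ∈ Finset.univ.filter (fun i : Fin n => n - k ≤ (i : ℕ)),
        min (sortedAsc b i / p) C}

/-- The winner number chosen by the Gini mechanism (ties broken in favor of more winners). -/
noncomputable def mechWinnerNum {n : ℕ} (b : Fin n → ℝ) (K : Finset ℕ) (g : ℝ) : ℕ :=
  sSup {k | k ∈ K ∧ pStar b k g = pStarK b K g}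

/-- The allocation of the Gini mechanism: agents in the bottom `n - k` positions (by budget)
receive `0`; the `k` winners receive `min (bᵢ/p, C)` at the mechanism price `p`. -/
noncomputable def mechAlloc {n : ℕ} (b : Fin n → ℝ) (K : Finset ℕ) (g : ℝ) : Fin n → ℝ :=
  fun i =>
    if ((Tuple.sort b).symm i : ℕ) < n - mechWinnerNum b K g then 0
    else min (b i / pStarK b K g) (capOf b (mechWinnerNum b K g) (pStarK b K g))

/-- Agent `i`'s spending under the Gini mechanism. -/
noncomputable def spend {n : ℕ} (b : Fin n → ℝ) (K : Finset ℕ) (g : ℝ) (i : Fin n) : ℝ :=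
  mechAlloc b K g i * pStarK b K g

/-- Agent `i`'s utility under the Gini mechanism when her valuation is `v`. -/
noncomputable def util {n : ℕ} (b : Fin n → ℝ) (K : Finset ℕ) (g : ℝ) (i : Fin n) (v : ℝ) : ℝ :=
  mechAlloc b K g i * (v - pStarK b K g)

-- AUX LEMMAS

lemma sortedAsc_le_of_le {n : ℕ} (a c : Fin n → ℝ) (hc : Monotone c)
    (h : ∀ i, a i ≤ c i) (i : Fin n) : sortedAsc a i ≤ c i := by
  set σ := Tuple.sort a with hσ
  have hex : ∃ j, i ≤ j ∧ σ j ≤ i := by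
    by_contra hcon
    push_neg at hcon
    have hsub : (Finset.Ici i).image σ ⊆ Finset.Ioi i := by
      intro x hx
      simp only [Finset.mem_image, Finset.mem_Ici] at hx
      obtain ⟨j, hj, rfl⟩ := hx
      exact Finset.mem_Ioi.mpr (hcon j hj)
    have hcard := Finset.card_le_card hsub
    rw [Finset.card_image_of_injective _ σ.injective, Fin.card_Ici, Fin.card_Ioi] at hcard
    have := i.isLt
    omega
  obtain ⟨j, hij, hji⟩ := hex
  calc sortedAsc a i ≤ sortedAsc a j := Tuple.monotone_sort a hij
    _ = a (σ j) := rfl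
    _ ≤ c (σ j) := h _
    _ ≤ c i := hc hji

lemma sortedAsc_of_monotone {n : ℕ} (a : Fin n → ℝ) (h : Monotone a) : sortedAsc a = a := by
  have h2 : a ∘ (Equiv.refl (Fin n)) = a ∘ Tuple.sort a :=
    Tuple.comp_sort_eq_comp_iff_monotone.mpr (by simpa using h)
  simpa [sortedAsc] using h2.symm

lemma card_zeros_perm {n : ℕ} (a : Fin n → ℝ) :
    (Finset.univ.filter fun i => sortedAsc a i = 0).card
      = (Finset.univ.filter fun i => a i = 0).card := by
  set σ := Tuple.sort a
  have himg : (Finset.univ.filter fun i => a (σ i) = 0).image σ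
      = Finset.univ.filter fun i => a i = 0 := by
    ext x
    simp only [Finset.mem_image, Finset.mem_filter, Finset.mem_univ, true_and]
    constructor
    · rintro ⟨j, hj, rfl⟩; exact hj
    · intro hx; exact ⟨σ.symm x, by simpa using hx, by simp⟩
  rw [← himg, Finset.card_image_of_injective _ σ.injective]
  rfl

lemma feasible_sorted {n k : ℕ} (b : Fin n → ℝ) (hb : Monotone b) {p : ℝ} (hp : 0 < p)
    {a : Fin n → ℝ} (ha : Feasible b k p a) : Feasible b k p (sortedAsc a) := by
  obtain ⟨h1, h2, h3, h4⟩ := ha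
  refine ⟨fun i => h1 _, ?_, ?_, ?_⟩
  · show ∑ i, a (Tuple.sort a i) = 1
    rw [Equiv.sum_comp (Tuple.sort a) a]; exact h2
  · intro i
    have hc : Monotone (fun j => b j / p) := fun x y hxy => (div_le_div_iff_of_pos_right hp).mpr (hb hxy)
    have hle := sortedAsc_le_of_le a (fun j => b j / p) hc (fun j => (le_div_iff₀ hp).mpr (h3 j)) i
    exact (le_div_iff₀ hp).mp hle
  · rw [card_zeros_perm]; exact h4

lemma flexGini_sortedAsc {n k : ℕ} (a : Fin n → ℝ) :
    flexGini k (sortedAsc a) = flexGini k a := by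
  rw [flexGini, flexGini]
  split_ifs with h
  · rw [sortedAsc_of_monotone (sortedAsc a) (Tuple.monotone_sort a)]
  · rfl

lemma monotone_zeros_prefix {n : ℕ} (a : Fin n → ℝ) (hmono : Monotone a) (hnn : ∀ i, 0 ≤ a i)
    {m : ℕ} (hcard : m ≤ (Finset.univ.filter fun i => a i = 0).card)
    (i : Fin n) (hi : (i : ℕ) < m) : a i = 0 := by
  by_contra hne
  have hsub : (Finset.univ.filter fun j => a j = 0) ⊆ Finset.Iio i := by
    intro j hj
    simp only [Finset.mem_filter, Finset.mem_univ, true_and] at hj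
    simp only [Finset.mem_Iio]
    by_contra hle
    push_neg at hle
    have h1 : a i ≤ a j := hmono hle
    have h2 : 0 < a i := lt_of_le_of_ne (hnn i) (Ne.symm hne)
    rw [hj] at h1
    linarith
  have hc := Finset.card_le_card hsub
  rw [Fin.card_Iio] at hc
  omega

lemma card_zeros_ge {n m : ℕ} (a : Fin n → ℝ) (hm : m < n)
    (h : ∀ i : Fin n, (i : ℕ) < m → a i = 0) :
    m ≤ (Finset.univ.filter fun i => a i = 0).card := by
  have hsub : Finset.Iio (⟨m, hm⟩ : Fin n) ⊆ Finset.univ.filter fun i => a i = 0 := by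
    intro j hj
    simp only [Finset.mem_Iio, Fin.lt_def] at hj
    simp only [Finset.mem_filter, Finset.mem_univ, true_and]
    exact h j hj
  have := Finset.card_le_card hsub
  rwa [Fin.card_Iio] at this

lemma sum_top {n k : ℕ} (hkn : k ≤ n) (f : Fin n → ℝ)
    (h0 : ∀ i : Fin n, (i : ℕ) < n - k → f i = 0) :
    ∑ i : Fin k, f ⟨n - k + (i : ℕ), by have := i.isLt; omega⟩ = ∑ i, f i := by
  classical
  set F : ℕ → ℝ := fun j => if h : j < n then f ⟨j, h⟩ else 0 with hF
  have hFv : ∀ i : Fin n, f i = F (i : ℕ) := fun i => by simp [hF, i.isLt]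
  have h1 : ∑ i : Fin k, f (⟨n - k + (i : ℕ), by have := i.isLt; omega⟩ : Fin n)
      = ∑ j ∈ Finset.range k, F (n - k + j) := by
    rw [← Fin.sum_univ_eq_sum_range (fun j => F (n - k + j)) k]
    exact Finset.sum_congr rfl fun i _ => hFv _
  have h2 : ∑ i, f i = ∑ j ∈ Finset.range n, F j := by
    rw [← Fin.sum_univ_eq_sum_range F n]
    exact Finset.sum_congr rfl fun i _ => hFv i
  have hz : ∑ j ∈ Finset.Ico 0 (n - k), F j = 0 := by
    apply Finset.sum_eq_zero
    intro j hj
    simp only [Finset.mem_Ico] at hj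
    have hjn : j < n := by omega
    rw [hF]
    simp only [dif_pos hjn]
    exact h0 ⟨j, hjn⟩ hj.2
  have h3 : ∑ j ∈ Finset.range n, F j
      = ∑ j ∈ Finset.Ico 0 (n - k), F j + ∑ j ∈ Finset.Ico (n - k) n, F j := by
    rw [Finset.range_eq_Ico]
    exact (Finset.sum_Ico_consecutive _ (Nat.zero_le _) (by omega)).symm
  have hnk : n - (n - k) = k := by omega
  rw [h1, h2, h3, hz, zero_add, Finset.sum_Ico_eq_sum_range, hnk]

lemma flexGini_eq {n k : ℕ} (hkn : k ≤ n) (a : Fin n → ℝ) (hmono : Monotone a)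
    (hnn : ∀ i, 0 ≤ a i) (hsum : ∑ i, a i = 1)
    (hcard : n - k ≤ (Finset.univ.filter fun i => a i = 0).card) :
    flexGini k a
      = 2 * (∑ i : Fin k, (((i : ℕ) : ℝ) + 1) * a ⟨n - k + (i : ℕ), by have := i.isLt; omega⟩)
          / k - ((k : ℝ) + 1) / k := by
  have h0 : ∀ i : Fin n, (i : ℕ) < n - k → a i = 0 := fun i hi =>
    monotone_zeros_prefix a hmono hnn hcard i hi
  have htop : ∑ i : Fin k, a (⟨n - k + (i : ℕ), by have := i.isLt; omega⟩ : Fin n) = 1 := by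
    rw [sum_top hkn a h0, hsum]
  rw [flexGini, dif_pos hkn, gini, sortedAsc_of_monotone a hmono, htop, mul_one]

lemma flexGini_lb {n k : ℕ} (hk1 : 1 ≤ k) (a : Fin n → ℝ) (hnn : ∀ i, 0 ≤ a i) :
    -2 ≤ flexGini k a := by
  have hk0 : (0 : ℝ) < k := by exact_mod_cast hk1
  have hk2 : ((k : ℝ) + 1) / k ≤ 2 := by
    rw [div_le_iff₀ hk0]
    have : (1 : ℝ) ≤ k := by exact_mod_cast hk1
    linarith
  rw [flexGini]
  split_ifs with h
  · rw [gini]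
    have hnum : 0 ≤ ∑ i : Fin k, (((i : ℕ) : ℝ) + 1)
        * sortedAsc a ⟨n - k + (i : ℕ), by have := i.isLt; omega⟩ :=
      Finset.sum_nonneg fun i _ => mul_nonneg (by positivity) (hnn _)
    have hden : 0 ≤ (k : ℝ) * ∑ i : Fin k,
        sortedAsc a ⟨n - k + (i : ℕ), by have := i.isLt; omega⟩ :=
      mul_nonneg hk0.le (Finset.sum_nonneg fun i _ => hnn _)
    have h1 : 0 ≤ 2 * (∑ i : Fin k, (((i : ℕ) : ℝ) + 1)
        * sortedAsc a ⟨n - k + (i : ℕ), by have := i.isLt; omega⟩) / ((k : ℝ) * ∑ i : Fin k,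
        sortedAsc a ⟨n - k + (i : ℕ), by have := i.isLt; omega⟩) :=
      div_nonneg (by linarith) hden
    linarith
  · linarith

lemma gStar_le_flexGini {n k : ℕ} (b : Fin n → ℝ) (hk1 : 1 ≤ k) {p : ℝ} {a : Fin n → ℝ}
    (ha : Feasible b k p a) : gStar b k p ≤ flexGini k a := by
  classical
  rw [gStar, if_pos ⟨a, ha⟩]
  apply csInf_le
  · refine ⟨-2, ?_⟩
    rintro x ⟨a', ha', rfl⟩
    exact flexGini_lb hk1 a' ha'.1
  · exact ⟨a, ha, rfl⟩

lemma price_le {n k : ℕ} (b : Fin n → ℝ) (hb : Monotone b) {p : ℝ} (hp : 0 < p)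
    (h : ∃ a, Feasible b k p a) :
    p ≤ ∑ i ∈ Finset.univ.filter (fun i : Fin n => n - k ≤ (i : ℕ)), b i := by
  obtain ⟨a, ha⟩ := h
  have ha' := feasible_sorted b hb hp ha
  set a' := sortedAsc a with ha'def
  have hmono' : Monotone a' := Tuple.monotone_sort a
  obtain ⟨h1, h2, h3, h4⟩ := ha'
  have h0 : ∀ i : Fin n, (i : ℕ) < n - k → a' i = 0 := fun i hi =>
    monotone_zeros_prefix a' hmono' h1 h4 i hi
  have hps : p = ∑ i, a' i * p := by rw [← Finset.sum_mul, h2, one_mul]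
  have hsub : ∑ i ∈ Finset.univ.filter (fun i : Fin n => n - k ≤ (i : ℕ)), a' i * p
      = ∑ i, a' i * p := by
    apply Finset.sum_subset (Finset.subset_univ _)
    intro x _ hx
    simp only [Finset.mem_filter, Finset.mem_univ, true_and, not_le] at hx
    rw [h0 x hx, zero_mul]
  rw [hps, ← hsub]
  exact Finset.sum_le_sum fun i _ => h3 i

lemma sum_weights {k : ℕ} : ∑ i : Fin k, (((i : ℕ) : ℝ) + 1) = k * (k + 1) / 2 := by
  rw [Fin.sum_univ_eq_sum_range (fun j => ((j : ℝ) + 1)) k]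
  induction k with
  | zero => simp
  | succ m ih => rw [Finset.sum_range_succ, ih]; push_cast; ring

lemma card_filter_top {n k : ℕ} (hkn : k ≤ n) (hk1 : 1 ≤ k) :
    (Finset.univ.filter fun i : Fin n => n - k ≤ (i : ℕ)).card = k := by
  have hlt : n - k < n := by omega
  have heq : (Finset.univ.filter fun i : Fin n => n - k ≤ (i : ℕ))
      = Finset.Ici (⟨n - k, hlt⟩ : Fin n) := by
    ext j
    simp [Finset.mem_Ici, Fin.le_def]
  rw [heq, Fin.card_Ici]
  show n - (n - k) = k
  omega



/-- For a winner number `k` with `b_{n-k+1} > 0` and a Gini cap `g ∈ (0,1)`,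
the set `{p > 0 : g*_k(p) ≤ g}` has a maximum element `p*_k`; moreover
`p*_k ∈ [k·b_{n-k+1}, ∑_{i=n-k+1}^n b_i]`, at `p*_k` a feasible allocation with flexible Gini
index at most `g` exists, and for every `p > p*_k` no such allocation exists. -/
theorem maxPrice_exists {n : ℕ} (b : Fin n → ℝ) (hmono : Monotone b) (hnn : ∀ i, 0 ≤ b i)
    (k : ℕ) (hk1 : 1 ≤ k) (hkn : k ≤ n) (hpos : 0 < b ⟨n - k, by omega⟩)
    (g : ℝ) (hg : g ∈ Set.Ioo (0 : ℝ) 1) :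
    ∃ pstar : ℝ,
      IsGreatest {p : ℝ | 0 < p ∧ gStar b k p ≤ g} pstar ∧
      pstar ∈ Set.Icc ((k : ℝ) * b ⟨n - k, by omega⟩)
        (∑ i ∈ Finset.univ.filter (fun i : Fin n => n - k ≤ (i : ℕ)), b i) ∧
      (∃ a, Feasible b k pstar a ∧ flexGini k a ≤ g) ∧
      (∀ p : ℝ, pstar < p → ¬ ∃ a, Feasible b k p a ∧ flexGini k a ≤ g) := by
  classical
  have hk0 : (0 : ℝ) < k := by exact_mod_cast hk1
  have hnk_lt : n - k < n := by omega
  set S : Set ℝ := {p : ℝ | 0 < p ∧ gStar b k p ≤ g} with hS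
  set B : ℝ := ∑ i ∈ Finset.univ.filter (fun i : Fin n => n - k ≤ (i : ℕ)), b i with hB
  set a0 : Fin n → ℝ := fun i => if n - k ≤ (i : ℕ) then (k : ℝ)⁻¹ else 0 with ha0
  have ha0nn : ∀ i, 0 ≤ a0 i := by
    intro i
    simp only [ha0]
    split_ifs
    · positivity
    · exact le_rfl
  have ha0mono : Monotone a0 := by
    intro i j hij
    simp only [ha0]
    split_ifs with hh1 hh2 hh2
    · exact le_rfl
    · exact absurd (le_trans hh1 hij) hh2
    · positivity
    · exact le_rfl
  have ha0sum : ∑ i, a0 i = 1 := by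
    have hh : ∑ i ∈ Finset.univ.filter (fun i : Fin n => n - k ≤ (i : ℕ)), (k : ℝ)⁻¹
        = ∑ i : Fin n, a0 i := Finset.sum_filter _ _
    rw [← hh, Finset.sum_const, card_filter_top hkn hk1, nsmul_eq_mul]
    field_simp
  have ha0card : n - k ≤ (Finset.univ.filter fun i => a0 i = 0).card := by
    apply card_zeros_ge a0 hnk_lt
    intro i hi
    simp only [ha0]
    rw [if_neg (by omega)]
  have hp0pos : 0 < (k : ℝ) * b ⟨n - k, hnk_lt⟩ := mul_pos hk0 hpos
  have ha0budget : ∀ i, a0 i * ((k : ℝ) * b ⟨n - k, hnk_lt⟩) ≤ b i := by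
    intro i
    simp only [ha0]
    split_ifs with h
    · rw [inv_mul_cancel_left₀ (ne_of_gt hk0)]
      exact hmono (show (⟨n - k, hnk_lt⟩ : Fin n) ≤ i from h)
    · rw [zero_mul]; exact hnn i
  have ha0feas : Feasible b k ((k : ℝ) * b ⟨n - k, hnk_lt⟩) a0 :=
    ⟨ha0nn, ha0sum, ha0budget, ha0card⟩
  have ha0gini : flexGini k a0 = 0 := by
    rw [flexGini_eq hkn a0 ha0mono ha0nn ha0sum ha0card]
    have hval : ∑ i : Fin k, (((i : ℕ) : ℝ) + 1) * a0 ⟨n - k + (i : ℕ), by have := i.isLt; omega⟩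
        = ∑ i : Fin k, (((i : ℕ) : ℝ) + 1) * (k : ℝ)⁻¹ := by
      apply Finset.sum_congr rfl
      intro i _
      congr 1
      simp only [ha0]
      rw [if_pos (Nat.le_add_right _ _)]
    rw [hval, ← Finset.sum_mul, sum_weights]
    field_simp
    ring
  have hmemS : (k : ℝ) * b ⟨n - k, hnk_lt⟩ ∈ S := by
    refine ⟨hp0pos, ?_⟩
    calc gStar b k _ ≤ flexGini k a0 := gStar_le_flexGini b hk1 ha0feas
      _ = 0 := ha0gini
      _ ≤ g := le_of_lt hg.1
  have hSne : S.Nonempty := ⟨_, hmemS⟩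
  have hub : ∀ p ∈ S, p ≤ B := by
    rintro p ⟨hp, hgp⟩
    have hfe : ∃ a, Feasible b k p a := by
      by_contra hcon
      rw [gStar, if_neg hcon] at hgp
      linarith [hg.2]
    exact price_le b hmono hp hfe
  have hbdd : BddAbove S := ⟨B, hub⟩
  set pstar := sSup S with hps
  have hp0le : (k : ℝ) * b ⟨n - k, hnk_lt⟩ ≤ pstar := le_csSup hbdd hmemS
  have hpstar_pos : 0 < pstar := lt_of_lt_of_le hp0pos hp0le
  have hpsB : pstar ≤ B := csSup_le hSne hub
  -- approximating sequence
  have key : ∀ j : ℕ, ∃ p : ℝ, ∃ aj : Fin n → ℝ,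
      pstar - 1 / ((j : ℝ) + 1) < p ∧ p ≤ pstar ∧ 0 < p ∧ Monotone aj ∧ Feasible b k p aj ∧
      flexGini k aj ≤ g + 1 / ((j : ℝ) + 1) := by
    intro j
    have hjpos : (0 : ℝ) < 1 / ((j : ℝ) + 1) := by positivity
    obtain ⟨p, hpS, hplt⟩ := exists_lt_of_lt_csSup hSne
      (by linarith : pstar - 1 / ((j : ℝ) + 1) < pstar)
    have hple : p ≤ pstar := le_csSup hbdd hpS
    obtain ⟨hp0, hpg⟩ := hpS
    have hfe : ∃ a, Feasible b k p a := by
      by_contra hcon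
      rw [gStar, if_neg hcon] at hpg
      linarith [hg.2]
    have hEq : gStar b k p = sInf (flexGini k '' {a | Feasible b k p a}) := by
      rw [gStar, if_pos hfe]
    have hltInf : sInf (flexGini k '' {a | Feasible b k p a}) < g + 1 / ((j : ℝ) + 1) := by
      rw [← hEq]; linarith
    have hne2 : (flexGini k '' {a | Feasible b k p a}).Nonempty := by
      obtain ⟨a, ha⟩ := hfe
      exact ⟨flexGini k a, a, ha, rfl⟩
    obtain ⟨x, ⟨a1, ha1, rfl⟩, hxlt⟩ := exists_lt_of_csInf_lt hne2 hltInf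
    exact ⟨p, sortedAsc a1, hplt, hple, hp0, Tuple.monotone_sort a1,
      feasible_sorted b hmono hp0 ha1, by rw [flexGini_sortedAsc]; linarith⟩
  choose P A h1 h2 h3 h4 h5 h6 using key
  have hmemIcc : ∀ j : ℕ, A j ∈ Set.Icc (0 : Fin n → ℝ) 1 := by
    intro j
    obtain ⟨hn', hs', -, -⟩ := h5 j
    constructor
    · intro i; exact hn' i
    · intro i
      have := Finset.single_le_sum (f := A j) (fun i _ => hn' i) (Finset.mem_univ i)
      rw [hs'] at this
      exact this
  obtain ⟨a, -, φ, hφ, hconv⟩ :=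
    (isCompact_Icc (a := (0 : Fin n → ℝ)) (b := 1)).tendsto_subseq hmemIcc
  have hcoord : ∀ i : Fin n, Filter.Tendsto (fun l => A (φ l) i) Filter.atTop (nhds (a i)) :=
    fun i => (tendsto_pi_nhds.mp hconv) i
  have h1div : Filter.Tendsto (fun l : ℕ => 1 / ((φ l : ℝ) + 1)) Filter.atTop (nhds 0) :=
    tendsto_one_div_add_atTop_nhds_zero_nat.comp hφ.tendsto_atTop
  have hPconv : Filter.Tendsto (fun l => P (φ l)) Filter.atTop (nhds pstar) := by
    apply tendsto_of_tendsto_of_tendsto_of_le_of_le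
      (g := fun l : ℕ => pstar - 1 / ((φ l : ℝ) + 1)) (h := fun _ : ℕ => pstar)
    · simpa using tendsto_const_nhds.sub h1div
    · exact tendsto_const_nhds
    · exact fun l => (h1 (φ l)).le
    · exact fun l => h2 (φ l)
  have hann : ∀ i, 0 ≤ a i := fun i => ge_of_tendsto' (hcoord i) (fun l => (h5 (φ l)).1 i)
  have hamono : Monotone a := fun i i' hii' =>
    le_of_tendsto_of_tendsto' (hcoord i) (hcoord i') (fun l => h4 (φ l) hii')
  have hasum : ∑ i, a i = 1 := by
    have hs : Filter.Tendsto (fun l => ∑ i, A (φ l) i) Filter.atTop (nhds (∑ i, a i)) :=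
      tendsto_finset_sum _ (fun i _ => hcoord i)
    have he : (fun l => ∑ i, A (φ l) i) = fun _ => (1 : ℝ) := funext fun l => (h5 (φ l)).2.1
    rw [he] at hs
    exact tendsto_nhds_unique hs tendsto_const_nhds
  have habud : ∀ i, a i * pstar ≤ b i := by
    intro i
    have hm : Filter.Tendsto (fun l => A (φ l) i * P (φ l)) Filter.atTop (nhds (a i * pstar)) :=
      (hcoord i).mul hPconv
    exact le_of_tendsto hm (Filter.Eventually.of_forall fun l => (h5 (φ l)).2.2.1 i)
  have hzero : ∀ i : Fin n, (i : ℕ) < n - k → a i = 0 := by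
    intro i hi
    have hz : ∀ l, A (φ l) i = 0 := fun l =>
      monotone_zeros_prefix (A (φ l)) (h4 (φ l)) (h5 (φ l)).1 (h5 (φ l)).2.2.2 i hi
    have ht : Filter.Tendsto (fun l => A (φ l) i) Filter.atTop (nhds 0) :=
      Filter.Tendsto.congr (fun l => (hz l).symm) tendsto_const_nhds
    exact tendsto_nhds_unique (hcoord i) ht
  have hacard : n - k ≤ (Finset.univ.filter fun i => a i = 0).card := card_zeros_ge a hnk_lt hzero
  have hafeas : Feasible b k pstar a := ⟨hann, hasum, habud, hacard⟩
  have hgle : flexGini k a ≤ g := by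
    have hLconv : Filter.Tendsto
        (fun l => 2 * (∑ i : Fin k, (((i : ℕ) : ℝ) + 1)
            * A (φ l) ⟨n - k + (i : ℕ), by have := i.isLt; omega⟩) / k - ((k : ℝ) + 1) / k)
        Filter.atTop
        (nhds (2 * (∑ i : Fin k, (((i : ℕ) : ℝ) + 1)
            * a ⟨n - k + (i : ℕ), by have := i.isLt; omega⟩) / k - ((k : ℝ) + 1) / k)) := by
      apply Filter.Tendsto.sub_const
      apply Filter.Tendsto.div_const
      apply Filter.Tendsto.const_mul
      exact tendsto_finset_sum _ (fun i _ => (hcoord _).const_mul _)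
    have hgconv : Filter.Tendsto (fun l : ℕ => g + 1 / ((φ l : ℝ) + 1)) Filter.atTop (nhds g) := by
      simpa using tendsto_const_nhds.add h1div
    have hle : ∀ l, 2 * (∑ i : Fin k, (((i : ℕ) : ℝ) + 1)
        * A (φ l) ⟨n - k + (i : ℕ), by have := i.isLt; omega⟩) / k - ((k : ℝ) + 1) / k
        ≤ g + 1 / ((φ l : ℝ) + 1) := by
      intro l
      have hf := h5 (φ l)
      rw [← flexGini_eq hkn (A (φ l)) (h4 (φ l)) hf.1 hf.2.1 hf.2.2.2]
      exact h6 (φ l)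
    have hfin := le_of_tendsto_of_tendsto' hLconv hgconv hle
    rw [flexGini_eq hkn a hamono hann hasum hacard]
    exact hfin
  refine ⟨pstar, ⟨⟨hpstar_pos, le_trans (gStar_le_flexGini b hk1 hafeas) hgle⟩,
    fun p hp => le_csSup hbdd hp⟩, Set.mem_Icc.mpr ⟨hp0le, hpsB⟩, ⟨a, hafeas, hgle⟩, ?_⟩
  intro p hlt hcon
  obtain ⟨a', ha', hga'⟩ := hcon
  have hpS : p ∈ S := ⟨lt_trans hpstar_pos hlt, le_trans (gStar_le_flexGini b hk1 ha') hga'⟩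
  exact absurd (le_csSup hbdd hpS) (not_le.mpr hlt)
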